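/- For any commutative monoid M, the monoid-valued functor M^(−) is zippable: the map ⟨M^(X+!), M^(!+Y)⟩ : M^(X+Y) → M^(X+1) × M^(1+Y) is injective for all sets X, Y. -/
import Mathlib

private lemma mapDomain_apply_unique {α β M : Type*} [AddCommMonoid M]
    (f : α → β) (x : α →₀ M) (a : α) (b : β) (hb : f a = b)
    (h : ∀ i, f i = b → i = a) :
    Finsupp.mapDomain f x b = x a := by
  classical
  rw [Finsupp.mapDomain, Finsupp.sum_apply, Finsupp.sum]
  simp_rw [Finsupp.single_apply]
  rw [Finset.sum_eq_single a]
  · simp [hb]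
  · intro i _ hia
    exact if_neg fun hib => hia (h i hib)
  · intro ha
    simp [Finsupp.notMem_support_iff.1 ha]

private lemma inl_unique {X Y : Type*} (x : X) :
    ∀ i : X ⊕ Y, Sum.map (id : X → X) (fun _ : Y => PUnit.unit) i = Sum.inl x →
      i = Sum.inl x := by
  rintro (i | i) hi
  · simpa using hi
  · exact absurd hi (by simp)

private lemma inr_unique {X Y : Type*} (y : Y) :
    ∀ i : X ⊕ Y, Sum.map (fun _ : X => PUnit.unit) (id : Y → Y) i = Sum.inr y →
      i = Sum.inr y := by
  rintro (i | i) hi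
  · exact absurd hi (by simp)
  · simpa using hi

/-- The monoid-valued functor `M^(−)` is zippable: pushing forward finitely
supported `M`-valued functions along `X+! : X+Y → X+1` and `!+Y : X+Y → 1+Y`
is jointly injective. -/
theorem monoidValued_zippable (M : Type*) [AddCommMonoid M] (X Y : Type*) :
    Function.Injective (fun f : (X ⊕ Y) →₀ M =>
      (Finsupp.mapDomain (Sum.map (id : X → X) (fun _ : Y => PUnit.unit)) f,
       Finsupp.mapDomain (Sum.map (fun _ : X => PUnit.unit) (id : Y → Y)) f)) := by
  intro f g h
  simp only [Prod.mk.injEq] at h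
  ext a
  rcases a with x | y
  · have hf := mapDomain_apply_unique (Sum.map (id : X → X) (fun _ : Y => PUnit.unit))
      f (Sum.inl x) (Sum.inl x) rfl (inl_unique x)
    have hg := mapDomain_apply_unique (Sum.map (id : X → X) (fun _ : Y => PUnit.unit))
      g (Sum.inl x) (Sum.inl x) rfl (inl_unique x)
    rw [← hf, ← hg, h.1]
  · have hf := mapDomain_apply_unique (Sum.map (fun _ : X => PUnit.unit) (id : Y → Y))
      f (Sum.inr y) (Sum.inr y) rfl (inr_unique y)
    have hg := mapDomain_apply_unique (Sum.map (fun _ : X => PUnit.unit) (id : Y → Y))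
      g (Sum.inr y) (Sum.inr y) rfl (inr_unique y)
    rw [← hf, ← hg, h.2]
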